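/- Let X be an infinite-dimensional separable Hilbert space over 𝕜 (𝕜 = ℝ or ℂ) and let A : X → X be a bounded linear operator. Then the following are equivalent: (i) for every frame (f_n)_{n∈ℕ} in X, the family (A f_n)_{n∈ℕ} is a frame in X; (ii) there exists a frame (f_n)_{n∈ℕ} in X such that (A f_n)_{n∈ℕ} is a frame in X; (iii) A is surjective. -/

import Mathlib

/-- A family `f : ℕ → X` in a Hilbert space `X` over `𝕜` is a frame if there exist
constants `0 < c ≤ C < ∞` such that `c‖x‖² ≤ ∑' n, |⟨x, f n⟩|² ≤ C‖x‖²` for all `x`. -/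
def IsFrame (𝕜 : Type*) {X : Type*} [RCLike 𝕜] [NormedAddCommGroup X]
    [InnerProductSpace 𝕜 X] (f : ℕ → X) : Prop :=
  ∃ c C : ℝ, 0 < c ∧ c ≤ C ∧ ∀ x : X,
    c * ‖x‖ ^ 2 ≤ ∑' n, ‖(inner 𝕜 x (f n) : 𝕜)‖ ^ 2 ∧
      ∑' n, ‖(inner 𝕜 x (f n) : 𝕜)‖ ^ 2 ≤ C * ‖x‖ ^ 2


section Aux

open ContinuousLinearMap (adjoint)

variable {𝕜 X : Type*} [RCLike 𝕜] [NormedAddCommGroup X]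
    [InnerProductSpace 𝕜 X] [CompleteSpace X]

local notation "⟪" x ", " y "⟫" => @inner 𝕜 _ _ x y

omit [CompleteSpace X] in
lemma re_inner_le_norm_mul_norm (x y : X) : RCLike.re ⟪x, y⟫ ≤ ‖x‖ * ‖y‖ :=
  le_trans (le_trans (le_abs_self _) (RCLike.abs_re_le_norm _)) (norm_inner_le_norm _ _)

/-- If the adjoint is bounded below, then `A` is surjective. -/
lemma surj_of_adjoint_bddBelow (A : X →L[𝕜] X) {m : ℝ} (hm : 0 < m)
    (h : ∀ x, m * ‖x‖ ≤ ‖adjoint A x‖) : Function.Surjective A := by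
  set T : X →L[𝕜] X := A ∘L adjoint A with hT
  have key : ∀ x : X, ‖adjoint A x‖ ^ 2 = RCLike.re ⟪x, T x⟫ := by
    intro x
    rw [← inner_self_eq_norm_sq (𝕜 := 𝕜)]
    congr 1
    exact ContinuousLinearMap.adjoint_inner_left A (adjoint A x) x
  have hbb : ∀ x : X, ‖x‖ ≤ (m ^ 2)⁻¹ * ‖T x‖ := by
    intro x
    rcases eq_or_ne x 0 with rfl | hx
    · simp
    · have hxpos : 0 < ‖x‖ := norm_pos_iff.2 hx
      have h1 : m ^ 2 * ‖x‖ ^ 2 ≤ ‖adjoint A x‖ ^ 2 := by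
        nlinarith [mul_self_le_mul_self (mul_nonneg hm.le (norm_nonneg x)) (h x)]
      have h2 : RCLike.re ⟪x, T x⟫ ≤ ‖x‖ * ‖T x‖ := re_inner_le_norm_mul_norm x (T x)
      have h3 : m ^ 2 * ‖x‖ ^ 2 ≤ ‖x‖ * ‖T x‖ := by
        rw [key x] at h1; linarith
      rw [le_inv_mul_iff₀ (by positivity)]
      nlinarith
  have hanti : AntilipschitzWith (⟨(m ^ 2)⁻¹, by positivity⟩ : NNReal) T :=
    T.antilipschitz_of_bound hbb
  have hclosed : IsClosed (Set.range T) := hanti.isClosed_range T.uniformContinuous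
  have horth : (LinearMap.range (T : X →ₗ[𝕜] X))ᗮ = ⊥ := by
    rw [Submodule.eq_bot_iff]
    intro y hy
    have h0 : ⟪T y, y⟫ = 0 :=
      (Submodule.mem_orthogonal _ y).1 hy (T y) (LinearMap.mem_range_self _ y)
    have h1 : RCLike.re ⟪y, T y⟫ = 0 := by
      rw [← inner_conj_symm, h0]; simp
    have h2 := key y
    have h3 := h y
    have h4 : ‖adjoint A y‖ = 0 := by
      have h5 : ‖adjoint A y‖ ^ 2 = 0 := by rw [h2, h1]
      exact pow_eq_zero_iff two_ne_zero |>.1 h5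
    have : ‖y‖ = 0 := le_antisymm (by nlinarith [norm_nonneg y]) (norm_nonneg y)
    exact norm_eq_zero.1 this
  have hrange : LinearMap.range (T : X →ₗ[𝕜] X) = ⊤ := by
    have hc : (LinearMap.range (T : X →ₗ[𝕜] X)).topologicalClosure = LinearMap.range (T : X →ₗ[𝕜] X) :=
      IsClosed.submodule_topologicalClosure_eq hclosed
    have h4 := (LinearMap.range (T : X →ₗ[𝕜] X)).orthogonal_orthogonal_eq_closure
    rw [horth, Submodule.bot_orthogonal_eq_top] at h4
    rw [← hc, ← h4]
  intro y
  obtain ⟨x, hx⟩ := LinearMap.range_eq_top.1 hrange y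
  exact ⟨adjoint A x, hx⟩

/-- If `A` is surjective, then the adjoint is bounded below. -/
lemma adjoint_bddBelow_of_surj (A : X →L[𝕜] X) (h : Function.Surjective A) :
    ∃ m : ℝ, 0 < m ∧ ∀ x, m * ‖x‖ ≤ ‖adjoint A x‖ := by
  obtain ⟨C, hC0, hC⟩ := A.exists_preimage_norm_le h
  refine ⟨C⁻¹, by positivity, fun y => ?_⟩
  rcases eq_or_ne y 0 with rfl | hy
  · simp
  obtain ⟨x, hx, hnx⟩ := hC y
  have h1 : ‖y‖ ^ 2 = RCLike.re ⟪x, adjoint A y⟫ := by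
    have : ⟪x, adjoint A y⟫ = ⟪y, y⟫ := by
      rw [ContinuousLinearMap.adjoint_inner_right, hx]
    rw [this, inner_self_eq_norm_sq]
  have h2 := re_inner_le_norm_mul_norm (𝕜 := 𝕜) x (adjoint A y)
  have hypos : 0 < ‖y‖ := norm_pos_iff.2 hy
  rw [inv_mul_le_iff₀ hC0]
  nlinarith [norm_nonneg (adjoint A y), norm_nonneg x]

end Aux

section Aux2

variable {𝕜 X : Type*} [RCLike 𝕜] [NormedAddCommGroup X]
    [InnerProductSpace 𝕜 X] [CompleteSpace X]

local notation "⟪" x ", " y "⟫" => @inner 𝕜 _ _ x y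

set_option maxHeartbeats 1000000 in
lemma exists_parseval_frame [TopologicalSpace.SeparableSpace X]
    (hX : ¬ FiniteDimensional 𝕜 X) :
    ∃ f : ℕ → X, ∀ x : X, HasSum (fun n => ‖⟪x, f n⟫‖ ^ 2) (‖x‖ ^ 2) := by
  obtain ⟨w, b, hb⟩ := exists_hilbertBasis 𝕜 X
  have ho : Orthonormal 𝕜 ((↑) : w → X) := hb ▸ b.orthonormal
  have hcw : Countable w := by
    have hd : Pairwise (Function.onFun Disjoint fun i : w => Metric.ball (i : X) (2⁻¹ : ℝ)) := by
      intro i j hij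
      have h0 : ⟪(i : X), (j : X)⟫ = 0 := ho.2 hij
      have h1i : ‖(i : X)‖ = 1 := ho.1 i
      have h1j : ‖(j : X)‖ = 1 := ho.1 j
      have hsq : ‖(i : X) - (j : X)‖ ^ 2 = 2 := by
        rw [@norm_sub_sq 𝕜, h0, h1i, h1j]; simp; norm_num
      have hdist : (1 : ℝ) ≤ dist (i : X) (j : X) := by
        rw [dist_eq_norm]
        nlinarith [norm_nonneg ((i : X) - (j : X))]
      simp only [Function.onFun]
      exact Metric.ball_disjoint_ball (by linarith)
    exact hd.countable_of_isOpen_disjoint (fun i => Metric.isOpen_ball)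
      (fun i => Metric.nonempty_ball.2 (by norm_num))
  have hiw : Infinite w := by
    by_contra hfin
    have : Finite w := not_infinite_iff_finite.1 hfin
    have : Fintype w := Fintype.ofFinite _
    exact hX (Module.Finite.of_basis b.toOrthonormalBasis.toBasis)
  obtain ⟨d⟩ := nonempty_denumerable ↥w
  let e : ↥w ≃ ℕ := @Denumerable.eqv _ d
  refine ⟨fun n => b (e.symm n), fun x => ?_⟩
  have hs : HasSum (fun i : w => ‖⟪x, b i⟫‖ ^ 2) (‖x‖ ^ 2) := by
    have h1 := (b.hasSum_inner_mul_inner x x).mapL (RCLike.reCLM (K := 𝕜))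
    have h2 : (fun i => RCLike.reCLM (⟪x, b i⟫ * ⟪b i, x⟫)) =
        fun i : w => ‖⟪x, b i⟫‖ ^ 2 := by
      funext i
      have hc : ⟪b i, x⟫ = (starRingEnd 𝕜) ⟪x, b i⟫ := (inner_conj_symm (b i) x).symm
      rw [hc, RCLike.mul_conj]
      simp only [RCLike.reCLM_apply, ← RCLike.ofReal_pow, RCLike.ofReal_re]
    have h3 : RCLike.reCLM ⟪x, x⟫ = ‖x‖ ^ 2 := by
      simp [inner_self_eq_norm_sq (𝕜 := 𝕜)]
    rwa [h2, h3] at h1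
  exact (Equiv.hasSum_iff e.symm).2 hs

end Aux2

open ContinuousLinearMap (adjoint) in
theorem stmt0 (𝕜 X : Type*) [RCLike 𝕜] [NormedAddCommGroup X]
    [InnerProductSpace 𝕜 X] [CompleteSpace X] [TopologicalSpace.SeparableSpace X]
    (hX : ¬ FiniteDimensional 𝕜 X) (A : X →L[𝕜] X) :
    List.TFAE
      [∀ f : ℕ → X, IsFrame 𝕜 f → IsFrame 𝕜 (fun n => A (f n)),
       ∃ f : ℕ → X, IsFrame 𝕜 f ∧ IsFrame 𝕜 (fun n => A (f n)),
       Function.Surjective A] := by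
  have heq : ∀ (f : ℕ → X) (x : X) (n : ℕ),
      (inner 𝕜 x (A (f n)) : 𝕜) = inner 𝕜 (adjoint A x) (f n) :=
    fun f x n => (ContinuousLinearMap.adjoint_inner_left A (f n) x).symm
  tfae_have 1 → 2 := by
    intro h1
    obtain ⟨f, hf⟩ := exists_parseval_frame (𝕜 := 𝕜) hX
    have hfr : IsFrame 𝕜 f := ⟨1, 1, one_pos, le_refl 1, fun x =>
      ⟨by rw [(hf x).tsum_eq, one_mul], by rw [(hf x).tsum_eq, one_mul]⟩⟩
    exact ⟨f, hfr, h1 f hfr⟩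
  tfae_have 2 → 3 := by
    rintro ⟨f, ⟨c, C, hc, hcC, hf⟩, ⟨c', C', hc', _, hg⟩⟩
    have hC : (0 : ℝ) < C := hc.trans_le hcC
    have hm : ∀ x, Real.sqrt (c' / C) * ‖x‖ ≤ ‖adjoint A x‖ := by
      intro x
      have h1 : c' * ‖x‖ ^ 2 ≤ ∑' n, ‖(inner 𝕜 x (A (f n)) : 𝕜)‖ ^ 2 := (hg x).1
      have h2 : ∑' n, ‖(inner 𝕜 (adjoint A x) (f n) : 𝕜)‖ ^ 2 ≤ C * ‖adjoint A x‖ ^ 2 :=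
        (hf (adjoint A x)).2
      have h3 : ∑' n, ‖(inner 𝕜 x (A (f n)) : 𝕜)‖ ^ 2
          = ∑' n, ‖(inner 𝕜 (adjoint A x) (f n) : 𝕜)‖ ^ 2 :=
        tsum_congr fun n => by rw [heq f x n]
      have h4 : c' * ‖x‖ ^ 2 ≤ C * ‖adjoint A x‖ ^ 2 := by
        rw [h3] at h1; linarith
      have h5 : (Real.sqrt (c' / C) * ‖x‖) ^ 2 ≤ ‖adjoint A x‖ ^ 2 := by
        rw [mul_pow, Real.sq_sqrt (by positivity)]
        rw [div_mul_eq_mul_div, div_le_iff₀ hC]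
        nlinarith
      have := Real.sqrt_le_sqrt h5
      rwa [Real.sqrt_sq (by positivity), Real.sqrt_sq (norm_nonneg _)] at this
    exact surj_of_adjoint_bddBelow A (Real.sqrt_pos.2 (by positivity)) hm
  tfae_have 3 → 1 := by
    rintro hsurj f ⟨c, C, hc, hcC, hf⟩
    obtain ⟨m, hm0, hm⟩ := adjoint_bddBelow_of_surj A hsurj
    have hC : (0 : ℝ) < C := hc.trans_le hcC
    refine ⟨c * m ^ 2, max (c * m ^ 2) (C * ‖adjoint A‖ ^ 2), by positivity,
      le_max_left _ _, fun x => ?_⟩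
    have h3 : ∑' n, ‖(inner 𝕜 x (A (f n)) : 𝕜)‖ ^ 2
        = ∑' n, ‖(inner 𝕜 (adjoint A x) (f n) : 𝕜)‖ ^ 2 :=
      tsum_congr fun n => by rw [heq f x n]
    constructor
    · have h1 : c * ‖adjoint A x‖ ^ 2 ≤ ∑' n, ‖(inner 𝕜 (adjoint A x) (f n) : 𝕜)‖ ^ 2 :=
        (hf (adjoint A x)).1
      have h2 : c * m ^ 2 * ‖x‖ ^ 2 ≤ c * ‖adjoint A x‖ ^ 2 := by
        nlinarith [mul_self_le_mul_self (mul_nonneg hm0.le (norm_nonneg x)) (hm x), hc.le]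
      calc c * m ^ 2 * ‖x‖ ^ 2 ≤ c * ‖adjoint A x‖ ^ 2 := h2
        _ ≤ _ := by rw [h3]; exact h1
    · have h1 : ∑' n, ‖(inner 𝕜 (adjoint A x) (f n) : 𝕜)‖ ^ 2 ≤ C * ‖adjoint A x‖ ^ 2 :=
        (hf (adjoint A x)).2
      have h2 : ‖adjoint A x‖ ≤ ‖adjoint A‖ * ‖x‖ := (adjoint A).le_opNorm x
      calc ∑' n, ‖(inner 𝕜 x (A (f n)) : 𝕜)‖ ^ 2
          ≤ C * ‖adjoint A x‖ ^ 2 := by rw [h3]; exact h1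
        _ ≤ C * ‖adjoint A‖ ^ 2 * ‖x‖ ^ 2 := by
            nlinarith [mul_self_le_mul_self (norm_nonneg (adjoint A x)) h2, hC.le]
        _ ≤ max (c * m ^ 2) (C * ‖adjoint A‖ ^ 2) * ‖x‖ ^ 2 := by
            nlinarith [le_max_right (c * m ^ 2) (C * ‖adjoint A‖ ^ 2), sq_nonneg ‖x‖]
  tfae_finish
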